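/- Let F : H → H be monotone and L-Lipschitz, g : H → ℝ ∪ {+∞} proper, convex, lower semicontinuous, γ > 0, and let the extragradient iterates be z̄ᵏ = prox_{γg}(zᵏ - γF(zᵏ)), zᵏ⁺¹ = prox_{γg}(zᵏ - γF(z̄ᵏ)). Define Vₖ = (2/γ)⟨zᵏ - zᵏ⁺¹, F(zᵏ) - F(z̄ᵏ)⟩ + (1/γ²)‖zᵏ⁺¹ - z̄ᵏ‖² + (1/γ²)‖zᵏ - zᵏ⁺¹‖². Then Vₖ₊₁ ≤ Vₖ - (1 - γ²L²)(1/γ²)‖zᵏ⁺¹ - z̄ᵏ‖² for all k ∈ ℕ. -/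

import Mathlib

open scoped RealInnerProductSpace

/-- `g` is proper: finite somewhere and never `⊥`. -/
def IsProperEF {H : Type*} (g : H → EReal) : Prop :=
  (∃ x, g x ≠ ⊤) ∧ ∀ x, g x ≠ ⊥

/-- `g` is convex (extended-real-valued). -/
def IsConvexEF {H : Type*} [NormedAddCommGroup H] [InnerProductSpace ℝ H]
    (g : H → EReal) : Prop :=
  ∀ x y : H, ∀ a b : ℝ, 0 ≤ a → 0 ≤ b → a + b = 1 →
    g (a • x + b • y) ≤ (a : EReal) * g x + (b : EReal) * g y

/-- `ξ` is a subgradient of `g` at `z`, i.e. `ξ ∈ ∂g(z)`. -/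
def InSubdiff {H : Type*} [NormedAddCommGroup H] [InnerProductSpace ℝ H]
    (g : H → EReal) (z ξ : H) : Prop :=
  ∀ y : H, g z + ((⟪ξ, y - z⟫ : ℝ) : EReal) ≤ g y

/-- `p = prox_{γ g}(x)`, i.e. `p` minimizes `g(·) + (1/(2γ))‖x - ·‖²`. -/
def IsProx {H : Type*} [NormedAddCommGroup H] [InnerProductSpace ℝ H]
    (g : H → EReal) (γ : ℝ) (x p : H) : Prop :=
  ∀ y : H, g p + ((1 / (2 * γ) * ‖x - p‖ ^ 2 : ℝ) : EReal) ≤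
    g y + ((1 / (2 * γ) * ‖x - y‖ ^ 2 : ℝ) : EReal)

/-- The Lyapunov function `V`. -/
noncomputable def lyapV {H : Type*} [NormedAddCommGroup H] [InnerProductSpace ℝ H]
    (F : H → H) (γ : ℝ) (z zb zp : H) : ℝ :=
  (2 / γ) * ⟪z - zp, F z - F zb⟫ + (1 / γ ^ 2) * ‖zp - zb‖ ^ 2 + (1 / γ ^ 2) * ‖z - zp‖ ^ 2

section Aux

variable {H : Type*} [NormedAddCommGroup H] [InnerProductSpace ℝ H]

lemma prox_ne_top {g : H → EReal} (hproper : IsProperEF g) {γ : ℝ} {x p : H}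
    (hp : IsProx g γ x p) : g p ≠ ⊤ := by
  obtain ⟨x0, hx0⟩ := hproper.1
  have h := hp x0
  intro htop
  rw [htop] at h
  rw [EReal.top_add_of_ne_bot (EReal.coe_ne_bot _), top_le_iff] at h
  exact (EReal.add_lt_top hx0 (EReal.coe_ne_top _)).ne h

lemma exists_real_of_prox {g : H → EReal} (hproper : IsProperEF g) {γ : ℝ} {x p : H}
    (hp : IsProx g γ x p) : ∃ r : ℝ, g p = (r : EReal) :=
  ⟨(g p).toReal, (EReal.coe_toReal (prox_ne_top hproper hp) (hproper.2 p)).symm⟩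

lemma prox_subdiff {g : H → EReal} (hproper : IsProperEF g) (hconv : IsConvexEF g)
    {γ : ℝ} (hγ : 0 < γ) {x p : H} (hp : IsProx g γ x p) :
    InSubdiff g p (γ⁻¹ • (x - p)) := by
  obtain ⟨gp, hgp⟩ := exists_real_of_prox hproper hp
  intro y
  by_cases hy : g y = ⊤
  · rw [hy]; exact le_top
  obtain ⟨gy, hgy⟩ : ∃ r : ℝ, g y = (r : EReal) :=
    ⟨(g y).toReal, (EReal.coe_toReal hy (hproper.2 y)).symm⟩
  rw [hgp, hgy, real_inner_smul_left, ← EReal.coe_add, EReal.coe_le_coe_iff]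
  have hmain : ∀ θ : ℝ, 0 < θ → θ ≤ 1 →
      gp + γ⁻¹ * ⟪x - p, y - p⟫ ≤ gy + θ * (1 / (2 * γ)) * ‖y - p‖ ^ 2 := by
    intro θ hθpos hθ1
    have hcv := hconv p y (1 - θ) θ (by linarith) hθpos.le (by ring)
    rw [hgp, hgy] at hcv
    have hcv' : g ((1 - θ) • p + θ • y) ≤ (((1 - θ) * gp + θ * gy : ℝ) : EReal) := by
      refine hcv.trans_eq ?_
      rw [EReal.coe_add, EReal.coe_mul, EReal.coe_mul]
    have hprox := hp ((1 - θ) • p + θ • y)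
    rw [hgp] at hprox
    have hle : ((gp : EReal) + ((1 / (2 * γ) * ‖x - p‖ ^ 2 : ℝ) : EReal)) ≤
        (((1 - θ) * gp + θ * gy : ℝ) : EReal) +
          ((1 / (2 * γ) * ‖x - ((1 - θ) • p + θ • y)‖ ^ 2 : ℝ) : EReal) :=
      hprox.trans (add_le_add_left hcv' _)
    rw [← EReal.coe_add, ← EReal.coe_add, EReal.coe_le_coe_iff] at hle
    have hvec : x - ((1 - θ) • p + θ • y) = (x - p) - θ • (y - p) := by
      module
    rw [hvec] at hle
    have hexp : ‖(x - p) - θ • (y - p)‖ ^ 2 =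
        ‖x - p‖ ^ 2 - 2 * (θ * ⟪x - p, y - p⟫) + θ ^ 2 * ‖y - p‖ ^ 2 := by
      rw [norm_sub_sq_real, real_inner_smul_right, norm_smul]
      simp [Real.norm_eq_abs, mul_pow, sq_abs]
    rw [hexp] at hle
    have hinv : γ⁻¹ = 2 * (1 / (2 * γ)) := by
      field_simp
    have hθineq : θ * (gp + γ⁻¹ * ⟪x - p, y - p⟫) ≤
        θ * (gy + θ * (1 / (2 * γ)) * ‖y - p‖ ^ 2) := by
      rw [hinv]
      nlinarith [hle]
    exact le_of_mul_le_mul_left hθineq hθpos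
  apply le_of_forall_pos_le_add
  intro ε hε
  set N := ‖y - p‖ ^ 2 with hNdef
  have hN : 0 ≤ N := by positivity
  have hθpos : 0 < min 1 (γ * ε / (N + 1)) := by positivity
  have h2 := hmain _ hθpos (min_le_left _ _)
  have h3 : min 1 (γ * ε / (N + 1)) ≤ γ * ε / (N + 1) := min_le_right _ _
  have key : γ * ε / (N + 1) * (1 / (2 * γ)) * N ≤ ε := by
    have e1 : γ * ε / (N + 1) * (1 / (2 * γ)) * N = ε * (N / (2 * (N + 1))) := by
      field_simp
    have e2 : N / (2 * (N + 1)) ≤ 1 := by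
      rw [div_le_one (by positivity)]; linarith
    rw [e1]; nlinarith
  have h4 : min 1 (γ * ε / (N + 1)) * (1 / (2 * γ)) * N ≤
      γ * ε / (N + 1) * (1 / (2 * γ)) * N := by
    have : 0 ≤ (1 / (2 * γ)) * N := by positivity
    nlinarith
  linarith

lemma cycle3 {g : H → EReal} {x1 x2 x3 ξ1 ξ2 ξ3 : H}
    (h1 : InSubdiff g x1 ξ1) (h2 : InSubdiff g x2 ξ2) (h3 : InSubdiff g x3 ξ3)
    {r1 r2 r3 : ℝ} (e1 : g x1 = (r1 : EReal)) (e2 : g x2 = (r2 : EReal))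
    (e3 : g x3 = (r3 : EReal)) :
    ⟪ξ1, x2 - x1⟫ + ⟪ξ2, x3 - x2⟫ + ⟪ξ3, x1 - x3⟫ ≤ 0 := by
  have a1 := h1 x2
  have a2 := h2 x3
  have a3 := h3 x1
  rw [e1, e2, ← EReal.coe_add, EReal.coe_le_coe_iff] at a1
  rw [e2, e3, ← EReal.coe_add, EReal.coe_le_coe_iff] at a2
  rw [e3, e1, ← EReal.coe_add, EReal.coe_le_coe_iff] at a3
  linarith

lemma key_identity (γ : ℝ) (a b c bb f0 fb0 f1 fb1 : H) :
    (2 * γ) * ⟪a - b, f0 - fb0⟫ + ‖a - b‖ ^ 2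
      - ((2 * γ) * ⟪b - c, f1 - fb1⟫ + ‖c - bb‖ ^ 2 + ‖b - c‖ ^ 2)
    = -(γ ^ 2 * ‖f1 - fb0‖ ^ 2) + (2 * γ) * ⟪f0 - f1, a - b⟫
      - 2 * (⟪a - γ • fb0 - b, bb - b⟫ + ⟪b - γ • f1 - bb, c - bb⟫
          + ⟪b - γ • fb1 - c, b - c⟫)
      + ‖(a - γ • fb0 - b) - (b - γ • f1 - bb)‖ ^ 2 := by
  simp only [← real_inner_self_eq_norm_sq, inner_sub_left, inner_sub_right,
    inner_add_left, inner_add_right, real_inner_smul_left, real_inner_smul_right,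
    real_inner_comm]
  ring

end Aux

theorem stmt4 {H : Type*} [NormedAddCommGroup H] [InnerProductSpace ℝ H] [CompleteSpace H]
    (F : H → H) (L γ : ℝ) (hL : 0 < L)
    (hmono : ∀ x y : H, 0 ≤ ⟪F x - F y, x - y⟫)
    (hlip : ∀ x y : H, ‖F x - F y‖ ≤ L * ‖x - y‖)
    (g : H → EReal) (hproper : IsProperEF g) (hconv : IsConvexEF g)
    (hlsc : LowerSemicontinuous g)
    (hγ : 0 < γ) (z zb : ℕ → H)
    (hzb : ∀ k, IsProx g γ (z k - γ • F (z k)) (zb k))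
    (hz : ∀ k, IsProx g γ (z k - γ • F (zb k)) (z (k + 1))) :
    ∀ k : ℕ,
      lyapV F γ (z (k + 1)) (zb (k + 1)) (z (k + 2)) ≤
        lyapV F γ (z k) (zb k) (z (k + 1)) -
          (1 - γ ^ 2 * L ^ 2) * (1 / γ ^ 2) * ‖z (k + 1) - zb k‖ ^ 2 := by
  intro k
  -- subgradients at z (k+1), zb (k+1), z (k+2)
  have ht : InSubdiff g (z (k + 1)) (γ⁻¹ • (z k - γ • F (zb k) - z (k + 1))) :=
    prox_subdiff hproper hconv hγ (hz k)
  have hs' : InSubdiff g (zb (k + 1)) (γ⁻¹ • (z (k + 1) - γ • F (z (k + 1)) - zb (k + 1))) :=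
    prox_subdiff hproper hconv hγ (hzb (k + 1))
  have ht' : InSubdiff g (z (k + 2)) (γ⁻¹ • (z (k + 1) - γ • F (zb (k + 1)) - z (k + 2))) :=
    prox_subdiff hproper hconv hγ (hz (k + 1))
  obtain ⟨r1, hr1⟩ := exists_real_of_prox hproper (hz k)
  obtain ⟨r2, hr2⟩ := exists_real_of_prox hproper (hzb (k + 1))
  obtain ⟨r3, hr3⟩ : ∃ r : ℝ, g (z (k + 2)) = (r : EReal) :=
    exists_real_of_prox hproper (hz (k + 1))
  have hcyc := cycle3 ht hs' ht' hr1 hr2 hr3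
  rw [real_inner_smul_left, real_inner_smul_left, real_inner_smul_left] at hcyc
  have hS : ⟪z k - γ • F (zb k) - z (k + 1), zb (k + 1) - z (k + 1)⟫ +
      ⟪z (k + 1) - γ • F (z (k + 1)) - zb (k + 1), z (k + 2) - zb (k + 1)⟫ +
      ⟪z (k + 1) - γ • F (zb (k + 1)) - z (k + 2), z (k + 1) - z (k + 2)⟫ ≤ 0 := by
    have hpos : (0 : ℝ) < γ⁻¹ := inv_pos.2 hγ
    have h2 : γ⁻¹ * (⟪z k - γ • F (zb k) - z (k + 1), zb (k + 1) - z (k + 1)⟫ +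
        ⟪z (k + 1) - γ • F (z (k + 1)) - zb (k + 1), z (k + 2) - zb (k + 1)⟫ +
        ⟪z (k + 1) - γ • F (zb (k + 1)) - z (k + 2), z (k + 1) - z (k + 2)⟫) ≤ γ⁻¹ * 0 := by
      rw [mul_zero]; linarith
    exact (mul_le_mul_iff_right₀ hpos).1 h2
  have hmono1 : (0 : ℝ) ≤ ⟪F (z k) - F (z (k + 1)), z k - z (k + 1)⟫ := hmono _ _
  have hmono1γ : (0 : ℝ) ≤ (2 * γ) * ⟪F (z k) - F (z (k + 1)), z k - z (k + 1)⟫ :=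
    mul_nonneg (by positivity) hmono1
  have hlips : ‖F (z (k + 1)) - F (zb k)‖ ^ 2 ≤ L ^ 2 * ‖z (k + 1) - zb k‖ ^ 2 := by
    have h := hlip (z (k + 1)) (zb k)
    nlinarith [norm_nonneg (F (z (k + 1)) - F (zb k)), norm_nonneg (z (k + 1) - zb k),
      mul_nonneg hL.le (norm_nonneg (z (k + 1) - zb k))]
  have hlipsγ : γ ^ 2 * ‖F (z (k + 1)) - F (zb k)‖ ^ 2 ≤
      γ ^ 2 * (L ^ 2 * ‖z (k + 1) - zb k‖ ^ 2) :=
    mul_le_mul_of_nonneg_left hlips (by positivity)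
  have hw : (0 : ℝ) ≤ ‖(z k - γ • F (zb k) - z (k + 1)) -
      (z (k + 1) - γ • F (z (k + 1)) - zb (k + 1))‖ ^ 2 := by positivity
  have hid := key_identity γ (z k) (z (k + 1)) (z (k + 2)) (zb (k + 1))
    (F (z k)) (F (zb k)) (F (z (k + 1))) (F (zb (k + 1)))
  unfold lyapV
  have hγ2 : (0 : ℝ) < γ ^ 2 := by positivity
  rw [← mul_le_mul_iff_right₀ hγ2]
  have hγ' : γ ≠ 0 := hγ.ne'
  have eA : γ ^ 2 * ((2 / γ) * ⟪z (k + 1) - z (k + 2), F (z (k + 1)) - F (zb (k + 1))⟫ +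
      (1 / γ ^ 2) * ‖z (k + 2) - zb (k + 1)‖ ^ 2 + (1 / γ ^ 2) * ‖z (k + 1) - z (k + 2)‖ ^ 2) =
      (2 * γ) * ⟪z (k + 1) - z (k + 2), F (z (k + 1)) - F (zb (k + 1))⟫ +
      ‖z (k + 2) - zb (k + 1)‖ ^ 2 + ‖z (k + 1) - z (k + 2)‖ ^ 2 := by
    field_simp
  have eB : γ ^ 2 * (((2 / γ) * ⟪z k - z (k + 1), F (z k) - F (zb k)⟫ +
      (1 / γ ^ 2) * ‖z (k + 1) - zb k‖ ^ 2 + (1 / γ ^ 2) * ‖z k - z (k + 1)‖ ^ 2) -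
      (1 - γ ^ 2 * L ^ 2) * (1 / γ ^ 2) * ‖z (k + 1) - zb k‖ ^ 2) =
      (2 * γ) * ⟪z k - z (k + 1), F (z k) - F (zb k)⟫ + ‖z (k + 1) - zb k‖ ^ 2 +
      ‖z k - z (k + 1)‖ ^ 2 - (1 - γ ^ 2 * L ^ 2) * ‖z (k + 1) - zb k‖ ^ 2 := by
    field_simp
  rw [eA, eB]
  linarith [hid, hS, hmono1γ, hlipsγ, hw]
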